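/- No maximal almost disjoint set is computable: if F ⊆ ℕ is a computable set such that each column F_n = {x : ⟨x,n⟩ ∈ F} is infinite and F_n ∩ F_k is finite for all n ≠ k, then there exists an infinite computable set R ⊆ ℕ such that R ∩ F_n is finite for every n. -/

import Mathlib

/-- The `n`-th column of a set of naturals. -/
def column (F : Set ℕ) (n : ℕ) : Set ℕ := {x | Nat.pair x n ∈ F}

namespace MADaux

/-- `true` iff `c (Nat.pair x i) = false` for all `i < s`. -/
def allBelow (c : ℕ → Bool) (x s : ℕ) : Bool :=
  Nat.rec true (fun i ih => ih && !c (Nat.pair x i)) s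

theorem allBelow_iff (c : ℕ → Bool) (x s : ℕ) :
    allBelow c x s = true ↔ ∀ i < s, c (Nat.pair x i) = false := by
  induction s with
  | zero => simp [allBelow]
  | succ s ih =>
    simp only [allBelow, Bool.and_eq_true, Bool.not_eq_true'] at *
    constructor
    · rintro ⟨h1, h2⟩ i hi
      rcases Nat.lt_succ_iff_lt_or_eq.1 hi with hi | rfl
      · exact ih.1 h1 i hi
      · exact h2
    · intro h
      exact ⟨ih.2 fun i hi => h i (hi.trans (Nat.lt_succ_self s)), h s (Nat.lt_succ_self s)⟩

def good (c : ℕ → Bool) (s x : ℕ) : Bool :=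
  c (Nat.pair x s) && allBelow c x s

theorem good_iff (c : ℕ → Bool) (s x : ℕ) :
    good c s x = true ↔ c (Nat.pair x s) = true ∧ ∀ i < s, c (Nat.pair x i) = false := by
  simp [good, allBelow_iff]

open Classical in
noncomputable def nxt (c : ℕ → Bool) (s b : ℕ) : ℕ :=
  if h : ∃ x, b < x ∧ good c s x = true then Nat.find h else 0

noncomputable def seqg (c : ℕ → Bool) : ℕ → ℕ
  | 0 => nxt c 0 0
  | s + 1 => nxt c (s + 1) (seqg c s)

noncomputable def chk (c : ℕ → Bool) (x : ℕ) : Bool :=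
  Nat.rec (seqg c 0 == x) (fun s ih => ih || (seqg c (s + 1) == x)) x

section Spec

variable {c : ℕ → Bool} (H : ∀ s b, ∃ x, b < x ∧ good c s x = true)
include H

theorem nxt_spec (s b : ℕ) : b < nxt c s b ∧ good c s (nxt c s b) = true := by
  rw [nxt, dif_pos (H s b)]
  exact Nat.find_spec (H s b)

theorem nxt_min {s b m : ℕ} (hm : m < nxt c s b) : ¬(b < m ∧ good c s m = true) := by
  rw [nxt, dif_pos (H s b)] at hm
  exact Nat.find_min (H s b) hm

theorem seqg_good (s : ℕ) : good c s (seqg c s) = true := by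
  cases s with
  | zero => exact (nxt_spec H 0 0).2
  | succ s => exact (nxt_spec H (s + 1) (seqg c s)).2

theorem seqg_strictMono : StrictMono (seqg c) :=
  strictMono_nat_of_lt_succ fun n => (nxt_spec H (n + 1) (seqg c n)).1

theorem chk_iff (x : ℕ) : chk c x = true ↔ ∃ s, seqg c s = x := by
  have key : ∀ n : ℕ,
      (Nat.rec (motive := fun _ => Bool) (seqg c 0 == x)
        (fun s ih => ih || (seqg c (s + 1) == x)) n) = true ↔ ∃ s ≤ n, seqg c s = x := by
    intro n
    induction n with
    | zero => simp
    | succ n ih =>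
      simp only [Bool.or_eq_true, beq_iff_eq, ih]
      constructor
      · rintro (⟨s, hs, rfl⟩ | rfl)
        exacts [⟨s, hs.trans (Nat.le_succ n), rfl⟩, ⟨n + 1, le_rfl, rfl⟩]
      · rintro ⟨s, hs, rfl⟩
        rcases Nat.le_succ_iff.1 hs with hs | rfl
        exacts [Or.inl ⟨s, hs, rfl⟩, Or.inr rfl]
  rw [chk, key x]
  constructor
  · rintro ⟨s, _, rfl⟩; exact ⟨s, rfl⟩
  · rintro ⟨s, rfl⟩
    exact ⟨s, (seqg_strictMono H).le_apply, rfl⟩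

end Spec

section Comp

variable {c : ℕ → Bool} (hc : Computable c)
include hc

theorem allBelow_computable : Computable₂ (allBelow c) := by
  have hpair : Computable₂ Nat.pair := Primrec₂.natPair.to_comp
  have := Computable.nat_rec (α := ℕ × ℕ) (σ := Bool)
    (f := fun p => p.2) (g := fun _ => true)
    (h := fun p q => q.2 && !c (Nat.pair p.1 q.1))
    Computable.snd (Computable.const true)
    ((Primrec.and.to_comp).comp (Computable.snd.comp Computable.snd)
      ((Primrec.not.to_comp).comp
        (hc.comp (hpair.comp (Computable.fst.comp Computable.fst)
          (Computable.fst.comp Computable.snd)))))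
  exact this.of_eq fun p => rfl

theorem good_computable : Computable₂ (good c) := by
  have hpair : Computable₂ Nat.pair := Primrec₂.natPair.to_comp
  exact (Primrec.and.to_comp).comp₂
    ((hc.comp (hpair.comp Computable.snd Computable.fst)).to₂)
    (((allBelow_computable hc).comp Computable.snd Computable.fst).to₂)

theorem nxt_computable (H : ∀ s b, ∃ x, b < x ∧ good c s x = true) :
    Computable₂ (nxt c) := by
  have hB : Computable₂ fun (p : ℕ × ℕ) (x : ℕ) => decide (p.2 < x) && good c p.1 x := by
    exact (Primrec.and.to_comp).comp₂
      ((Primrec.nat_lt.decide.to_comp).comp (Computable.snd.comp Computable.fst) Computable.snd).to₂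
      (((good_computable hc).comp (Computable.fst.comp Computable.fst) Computable.snd).to₂)
  have hpr : Partrec fun p : ℕ × ℕ =>
      Nat.rfind fun x => Part.some (decide (p.2 < x) && good c p.1 x) :=
    Partrec.rfind (hB.partrec₂)
  have : Computable fun p : ℕ × ℕ => nxt c p.1 p.2 := by
    apply hpr.of_eq_tot
    intro p
    apply Nat.mem_rfind.2
    constructor
    · have h := nxt_spec H p.1 p.2
      simp only [Part.mem_some_iff]
      simp [h.1, h.2]
    · intro m hm
      have h := nxt_min H hm
      simp only [Part.mem_some_iff]
      rcases Nat.lt_or_ge m (p.2 + 1) with h' | h'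
      · simp [Nat.not_lt.2 (Nat.lt_succ_iff.1 h')]
      · have : good c p.1 m = false := by
          have : ¬ good c p.1 m = true := fun hg => h ⟨h', hg⟩
          simpa using this
        simp [this]
  exact this.to₂

theorem seqg_computable (H : ∀ s b, ∃ x, b < x ∧ good c s x = true) :
    Computable (seqg c) := by
  have := Computable.nat_rec (α := ℕ) (σ := ℕ)
    (f := fun x => x) (g := fun _ => nxt c 0 0)
    (h := fun _ q => nxt c (q.1 + 1) q.2)
    Computable.id (Computable.const (nxt c 0 0))
    (((nxt_computable hc H).comp
      (Computable.succ.comp (Computable.fst.comp Computable.snd))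
      (Computable.snd.comp Computable.snd)))
  apply this.of_eq
  intro n
  induction n with
  | zero => rfl
  | succ n ih => simp only [seqg] at *; rw [← ih]

theorem chk_computable (H : ∀ s b, ∃ x, b < x ∧ good c s x = true) :
    Computable (chk c) := by
  have hg := seqg_computable hc H
  have := Computable.nat_rec (α := ℕ) (σ := Bool)
    (f := fun x => x) (g := fun x => seqg c 0 == x)
    (h := fun x q => q.2 || (seqg c (q.1 + 1) == x))
    Computable.id
    ((Primrec.beq.to_comp).comp (Computable.const (seqg c 0)) Computable.id)
    ((Primrec.or.to_comp).comp (Computable.snd.comp Computable.snd)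
      ((Primrec.beq.to_comp).comp
        (hg.comp (Computable.succ.comp (Computable.fst.comp Computable.snd)))
        Computable.fst))
  exact this.of_eq fun n => rfl

end Comp

end MADaux

open MADaux in
/-- No maximal almost disjoint set is computable: if `F` is computable and describes an
almost disjoint family, then some infinite computable set meets every column finitely. -/
theorem no_MAD_set_is_computable (F : Set ℕ)
    (hF : ComputablePred (· ∈ F))
    (hinf : ∀ n, (column F n).Infinite)
    (had : ∀ n k, n ≠ k → (column F n ∩ column F k).Finite) :
    ∃ R : Set ℕ, ComputablePred (· ∈ R) ∧ R.Infinite ∧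
      ∀ n, (R ∩ column F n).Finite := by
  obtain ⟨c, hc, hFeq⟩ := ComputablePred.computable_iff.1 hF
  have hmem : ∀ a, a ∈ F ↔ c a = true := fun a => iff_of_eq (congrFun hFeq a)
  -- existence of next elements
  have H : ∀ s b, ∃ x, b < x ∧ good c s x = true := by
    intro s b
    have hfin : (column F s ∩ ⋃ i ∈ Finset.range s, column F i).Finite := by
      rw [Set.inter_iUnion₂]
      exact Set.Finite.biUnion (Finset.range s).finite_toSet
        fun i hi => had s i (by simpa using (Finset.mem_range.1 hi).ne')
    have hinf' : (column F s \ (column F s ∩ ⋃ i ∈ Finset.range s, column F i)).Infinite :=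
      (hinf s).diff hfin
    obtain ⟨x, hx, hbx⟩ := hinf'.exists_gt b
    refine ⟨x, hbx, (good_iff c s x).2 ⟨(hmem _).1 hx.1, fun i hi => ?_⟩⟩
    by_contra hci
    have : x ∈ column F i := (hmem _).2 (Bool.not_eq_false _ ▸ hci)
    exact hx.2 ⟨hx.1, Set.mem_biUnion (Finset.mem_range.2 hi) this⟩
  have hsm := seqg_strictMono (c := c) H
  refine ⟨Set.range (seqg c), ?_, Set.infinite_range_of_injective hsm.injective, ?_⟩
  · refine ComputablePred.computable_iff.2 ⟨chk c, chk_computable hc H, ?_⟩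
    funext x
    apply propext
    rw [chk_iff H]
    exact ⟨fun ⟨s, hs⟩ => ⟨s, hs⟩, fun ⟨s, hs⟩ => ⟨s, hs⟩⟩
  · intro n
    apply Set.Finite.subset ((Set.finite_Iic n).image (seqg c))
    rintro x ⟨⟨s, rfl⟩, hxn⟩
    refine ⟨s, ?_, rfl⟩
    by_contra hs
    have hs' : n < s := Nat.lt_of_not_le hs
    have hg := (good_iff c s (seqg c s)).1 (seqg_good H s)
    have : c (Nat.pair (seqg c s) n) = false := hg.2 n hs'
    have : Nat.pair (seqg c s) n ∈ F := hxn
    rw [hmem] at this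
    simp_all
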